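/- For every integer n, BP(n) − i·BP(n+1) − j·BP(n+2) − ij·BP(n+3) = 2·(q(n+1) − P(n+5))·1 + 2·P(n+5)·i + 2·P(n+4)·j − 2·P(n+3)·ij. -/

import Mathlib

open scoped TensorProduct

noncomputable def bi : ℂ ⊗[ℝ] ℂ := Complex.I ⊗ₜ[ℝ] 1
noncomputable def bj : ℂ ⊗[ℝ] ℂ := (1 : ℂ) ⊗ₜ[ℝ] Complex.I
noncomputable def bij : ℂ ⊗[ℝ] ℂ := Complex.I ⊗ₜ[ℝ] Complex.I

/-- The bicomplex Pell number `BP n = P n + P (n+1) i + P (n+2) j + P (n+3) ij`. -/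
noncomputable def BP (P : ℤ → ℤ) (n : ℤ) : ℂ ⊗[ℝ] ℂ :=
  (P n : ℝ) • (1 : ℂ ⊗[ℝ] ℂ) + (P (n + 1) : ℝ) • bi + (P (n + 2) : ℝ) • bj +
    (P (n + 3) : ℝ) • bij

lemma pell_rec_zero (f : ℤ → ℤ) (hf : ∀ n : ℤ, f (n + 2) = 2 * f (n + 1) + f n)
    (h0 : f 0 = 0) (h1 : f 1 = 0) : ∀ n : ℤ, f n = 0 := by
  have key : ∀ n : ℤ, f n = 0 ∧ f (n + 1) = 0 := by
    intro n
    induction n using Int.induction_on with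
    | zero => exact ⟨h0, h1⟩
    | succ k ih =>
      have h := hf k
      rw [ih.1, ih.2] at h
      constructor
      · exact ih.2
      · rw [show (k : ℤ) + 1 + 1 = k + 2 by ring, h]; ring
    | pred k ih =>
      have h := hf (-(k : ℤ) - 1)
      rw [show -(k : ℤ) - 1 + 2 = -k + 1 by ring, show -(k : ℤ) - 1 + 1 = -k by ring,
        ih.1, ih.2] at h
      exact ⟨by omega, by rw [show -(k : ℤ) - 1 + 1 = -k by ring]; exact ih.1⟩
  exact fun n => (key n).1

theorem bicomplexPell_alt_sum' (P q : ℤ → ℤ)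
    (hP : ∀ n : ℤ, P (n + 2) = 2 * P (n + 1) + P n) (hP0 : P 0 = 0) (hP1 : P 1 = 1)
    (hq : ∀ n : ℤ, q (n + 2) = 2 * q (n + 1) + q n) (hq0 : q 0 = 1) (hq1 : q 1 = 1)
    (n : ℤ) :
    BP P n - bi * BP P (n + 1) - bj * BP P (n + 2) - bij * BP P (n + 3) =
      (2 * ((q (n + 1) : ℝ) - (P (n + 5) : ℝ))) • (1 : ℂ ⊗[ℝ] ℂ) +
        (2 * (P (n + 5) : ℝ)) • bi + (2 * (P (n + 4) : ℝ)) • bj -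
        (2 * (P (n + 3) : ℝ)) • bij := by
  have hqP : ∀ m : ℤ, q (m + 1) = P m + P (m + 1) := by
    have key := pell_rec_zero (fun m => q (m + 1) - P m - P (m + 1))
      (fun m => by
        have h1 := hq (m + 1)
        have h2 := hP m
        have h3 := hP (m + 1)
        simp only [show m + 2 + 1 = m + 3 by ring, show m + 1 + 2 = m + 3 by ring,
          show m + 1 + 1 = m + 2 by ring, show m + 1 + 1 + 1 = m + 3 by ring,
          show m + 2 + 2 = m + 4 by ring] at *
        omega)
      (by have := hq1; have := hP0; have := hP1; norm_num; omega)
      (by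
        have h1 := hq 0
        have h2 := hP 0
        norm_num at h1 h2 ⊢
        omega)
    intro m
    have := key m
    omega
  have hii : bi * bi = -(1 : ℂ ⊗[ℝ] ℂ) := by
    simp [bi, Algebra.TensorProduct.tmul_mul_tmul, Complex.I_mul_I,
      Algebra.TensorProduct.one_def, TensorProduct.neg_tmul]
  have hjj : bj * bj = -(1 : ℂ ⊗[ℝ] ℂ) := by
    simp [bj, Algebra.TensorProduct.tmul_mul_tmul, Complex.I_mul_I,
      Algebra.TensorProduct.one_def, TensorProduct.tmul_neg]
  have hibj : bi * bj = bij := by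
    simp [bi, bj, bij, Algebra.TensorProduct.tmul_mul_tmul]
  have hjbi : bj * bi = bij := by
    simp [bi, bj, bij, Algebra.TensorProduct.tmul_mul_tmul]
  have hibij : bi * bij = -bj := by
    simp [bi, bj, bij, Algebra.TensorProduct.tmul_mul_tmul, Complex.I_mul_I,
      TensorProduct.neg_tmul]
  have hbiji : bij * bi = -bj := by
    simp [bi, bj, bij, Algebra.TensorProduct.tmul_mul_tmul, Complex.I_mul_I,
      TensorProduct.neg_tmul]
  have hjbij : bj * bij = -bi := by
    simp [bi, bj, bij, Algebra.TensorProduct.tmul_mul_tmul, Complex.I_mul_I,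
      TensorProduct.tmul_neg]
  have hbijj : bij * bj = -bi := by
    simp [bi, bj, bij, Algebra.TensorProduct.tmul_mul_tmul, Complex.I_mul_I,
      TensorProduct.tmul_neg]
  have hbijbij : bij * bij = (1 : ℂ ⊗[ℝ] ℂ) := by
    simp [bij, Algebra.TensorProduct.tmul_mul_tmul, Complex.I_mul_I,
      Algebra.TensorProduct.one_def, TensorProduct.neg_tmul, TensorProduct.tmul_neg]
  -- cast the integer identities to ℝ
  have e1 : (P (n + 6) : ℝ) = 2 * (P (n + 5) : ℝ) + (P (n + 4) : ℝ) := by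
    have h := hP (n + 4)
    rw [show n + 4 + 2 = n + 6 by ring, show n + 4 + 1 = n + 5 by ring] at h
    exact_mod_cast congrArg (Int.cast : ℤ → ℝ) h
  have e2 : (P (n + 2) : ℝ) = 2 * (P (n + 1) : ℝ) + (P n : ℝ) := by
    exact_mod_cast congrArg (Int.cast : ℤ → ℝ) (hP n)
  have e3 : (q (n + 1) : ℝ) = (P n : ℝ) + (P (n + 1) : ℝ) := by
    exact_mod_cast congrArg (Int.cast : ℤ → ℝ) (hqP n)
  simp only [BP, show n + 1 + 1 = n + 2 by ring, show n + 1 + 2 = n + 3 by ring,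
    show n + 1 + 3 = n + 4 by ring, show n + 2 + 1 = n + 3 by ring,
    show n + 2 + 2 = n + 4 by ring, show n + 2 + 3 = n + 5 by ring,
    show n + 3 + 1 = n + 4 by ring, show n + 3 + 2 = n + 5 by ring,
    show n + 3 + 3 = n + 6 by ring, show n + 4 + 2 = n + 6 by ring]
  simp only [mul_add, mul_smul_comm, mul_one, hii, hjj, hibj, hjbi, hibij, hbiji,
    hjbij, hbijj, hbijbij]
  rw [e1, e2, e3]
  module
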